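/- Let U be a set of unit-magnitude complex numbers that forms a subgroup of T/{±1}: 1 ∈ U, and for all α, β ∈ U one has αβ ∈ U or −αβ ∈ U, and α⁻¹ ∈ U or −α⁻¹ ∈ U. If U contains three elements that are pairwise non-±-equal, then R(U) is a subring of ℂ (it contains 0 and 1 and is closed under addition, negation, and multiplication). -/

import Mathlib

open Complex

/-- The bracket `[x,y] = x * conj y - y * conj x`. -/
noncomputable def brkt (x y : ℂ) : ℂ := x * (starRingEnd ℂ) y - y * (starRingEnd ℂ) x

/-- `lineInt α β p q` is the intersection point `I_{α,β}(p,q)` of the line through `p`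
with direction `α` and the line through `q` with direction `β` (for unit `α ≠ ±β`),
given by the formula of Buhler et al. -/
noncomputable def lineInt (α β p q : ℂ) : ℂ :=
  brkt α p / brkt α β * β + brkt β q / brkt β α * α

/-- The sets `S n` in the inductive construction. -/
def stepSet (U : Set ℂ) : ℕ → Set ℂ
  | 0 => {0, 1}
  | n + 1 => {z | ∃ α ∈ U, ∃ β ∈ U, α ≠ β ∧ α ≠ -β ∧
      ∃ p ∈ stepSet U n, ∃ q ∈ stepSet U n, z = lineInt α β p q}

/-- `RU U = ⋃ n, S n`. -/
def RU (U : Set ℂ) : Set ℂ := ⋃ n, stepSet U n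

/-- Elementary monomials of `U`. -/
def IsElem (U : Set ℂ) (z : ℂ) : Prop :=
  ∃ α ∈ U, ∃ β ∈ U, α ≠ β ∧ α ≠ -β ∧ z = lineInt α β 0 1

/-- Monomials of `U`, defined inductively. -/
inductive IsMonomial (U : Set ℂ) : ℂ → Prop
  | elementary (α β : ℂ) (hα : α ∈ U) (hβ : β ∈ U) (h1 : α ≠ β) (h2 : α ≠ -β) :
      IsMonomial U (lineInt α β 0 1)
  | step (α β m : ℂ) (hα : α ∈ U) (hβ : β ∈ U) (h1 : α ≠ β) (h2 : α ≠ -β)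
      (hm : IsMonomial U m) : IsMonomial U (lineInt α β 0 m)

/-- `P`: the real numbers arising as length-two monomials `I_{γ,δ}(0,z)` on the real axis. -/
def projSet (U : Set ℂ) : Set ℝ :=
  {r | ∃ γ ∈ U, ∃ δ ∈ U, γ ≠ δ ∧ γ ≠ -δ ∧ ∃ z, IsElem U z ∧ (r : ℂ) = lineInt γ δ 0 z}

/-- `m` is a `ℤ[P]`-linear combination of elementary monomials of `U`. -/
def IsZPComb (U : Set ℂ) (m : ℂ) : Prop :=
  ∃ (n : ℕ) (c : Fin n → ℝ) (z : Fin n → ℂ),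
    (∀ i, c i ∈ Subring.closure (projSet U)) ∧ (∀ i, IsElem U (z i)) ∧
    m = ∑ i, (c i : ℂ) * z i


lemma brkt_zero_right (x : ℂ) : brkt x 0 = 0 := by simp [brkt]
lemma brkt_zero_left (x : ℂ) : brkt 0 x = 0 := by simp [brkt]
lemma brkt_anti (x y : ℂ) : brkt x y = - brkt y x := by simp [brkt]
lemma conj_brkt (x y : ℂ) : (starRingEnd ℂ) (brkt x y) = - brkt x y := by
  simp [brkt]; ring
lemma brkt_add_right (x p q : ℂ) : brkt x (p + q) = brkt x p + brkt x q := by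
  simp [brkt]; ring
lemma brkt_mul_right (x c y : ℂ) (hc : (starRingEnd ℂ) c = c) :
    brkt x (c * y) = c * brkt x y := by
  simp only [brkt, map_mul, hc]; ring
lemma brkt_neg_left (x y : ℂ) : brkt (-x) y = - brkt x y := by
  simp only [brkt, map_neg]; ring
lemma brkt_neg_right (x y : ℂ) : brkt x (-y) = - brkt x y := by
  simp only [brkt, map_neg]; ring
lemma brkt_ne_zero {x y : ℂ} (hx : ‖x‖ = 1) (hy : ‖y‖ = 1)
    (h1 : x ≠ y) (h2 : x ≠ -y) : brkt x y ≠ 0 := by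
  have hxc : x * (starRingEnd ℂ) x = 1 := by
    rw [Complex.mul_conj, Complex.normSq_eq_norm_sq, hx]; norm_num
  have hyc : y * (starRingEnd ℂ) y = 1 := by
    rw [Complex.mul_conj, Complex.normSq_eq_norm_sq, hy]; norm_num
  intro h
  have key : x^2 - y^2 = brkt x y * (x * y) := by
    have : (x * (starRingEnd ℂ) y - y * (starRingEnd ℂ) x) * (x*y)
        = x^2 * (y * (starRingEnd ℂ) y) - y^2 * (x * (starRingEnd ℂ) x) := by ring
    rw [brkt, this, hxc, hyc]; ring
  rw [h, zero_mul, sub_eq_zero] at key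
  have := sq_eq_sq_iff_eq_or_eq_neg.mp key
  rcases this with h' | h'
  · exact h1 h'
  · exact h2 h'

lemma lineInt_neg_left (α β p q : ℂ) : lineInt (-α) β p q = lineInt α β p q := by
  simp only [lineInt, brkt_neg_left, brkt_neg_right, neg_div_neg_eq, div_neg, neg_div]
  ring
lemma lineInt_neg_right (α β p q : ℂ) : lineInt α (-β) p q = lineInt α β p q := by
  simp only [lineInt, brkt_neg_left, brkt_neg_right, neg_div_neg_eq, div_neg, neg_div]
  ring
lemma lineInt_self {α β : ℂ} (h : brkt α β ≠ 0) (p : ℂ) : lineInt α β p p = p := by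
  have h' : brkt β α ≠ 0 := by rw [brkt_anti]; simpa using h
  rw [lineInt]
  field_simp
  simp only [brkt]; ring
lemma lineInt_split (α β p q : ℂ) : lineInt α β p q = lineInt α β p 0 + lineInt α β 0 q := by
  simp [lineInt, brkt_zero_right]
lemma lineInt_smul {c : ℂ} (hc : (starRingEnd ℂ) c = c) (α β p q : ℂ) :
    lineInt α β (c * p) (c * q) = c * lineInt α β p q := by
  simp only [lineInt, brkt_mul_right _ _ _ hc, mul_div_assoc]; ring
lemma lineInt_rot {γ : ℂ} (hγ : γ * (starRingEnd ℂ) γ = 1) (α β p q : ℂ) :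
    lineInt (γ * α) (γ * β) (γ * p) (γ * q) = γ * lineInt α β p q := by
  have hb : ∀ x y : ℂ, brkt (γ * x) (γ * y) = brkt x y := by
    intro x y
    simp only [brkt, map_mul]
    calc γ * x * ((starRingEnd ℂ) γ * (starRingEnd ℂ) y) - γ * y * ((starRingEnd ℂ) γ * (starRingEnd ℂ) x)
        = (γ * (starRingEnd ℂ) γ) * (x * (starRingEnd ℂ) y) - (γ * (starRingEnd ℂ) γ) * (y * (starRingEnd ℂ) x) := by ring
      _ = x * (starRingEnd ℂ) y - y * (starRingEnd ℂ) x := by rw [hγ]; ring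
  simp only [lineInt, hb]; ring
lemma lineInt_trans {α β : ℂ} (h : brkt α β ≠ 0) (p q c : ℂ) :
    lineInt α β (p + c) (q + c) = lineInt α β p q + c := by
  have hba : brkt β α ≠ 0 := by rw [brkt_anti]; simpa using h
  have key : brkt α c / brkt α β * β + brkt β c / brkt β α * α = c := by
    have := lineInt_self h c
    simpa [lineInt] using this
  simp only [lineInt, brkt_add_right]
  linear_combination key

lemma zero_mem_RU (U : Set ℂ) : (0:ℂ) ∈ RU U :=
  Set.mem_iUnion.mpr ⟨0, Set.mem_insert _ _⟩
lemma one_mem_RU (U : Set ℂ) : (1:ℂ) ∈ RU U :=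
  Set.mem_iUnion.mpr ⟨0, Set.mem_insert_of_mem _ rfl⟩

lemma stepSet_mono {U : Set ℂ} (hU : ∀ z ∈ U, ‖z‖ = 1) {α β : ℂ}
    (hα : α ∈ U) (hβ : β ∈ U) (h1 : α ≠ β) (h2 : α ≠ -β) {m n : ℕ} (h : m ≤ n) :
    stepSet U m ⊆ stepSet U n := by
  induction h with
  | refl => exact subset_rfl
  | step _ ih =>
      refine ih.trans fun z hz => ⟨α, hα, β, hβ, h1, h2, z, hz, z, hz, ?_⟩
      exact (lineInt_self (brkt_ne_zero (hU α hα) (hU β hβ) h1 h2) z).symm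

lemma RU_lineInt {U : Set ℂ} (hU : ∀ z ∈ U, ‖z‖ = 1) {α β p q : ℂ}
    (hα : α ∈ U) (hβ : β ∈ U) (h1 : α ≠ β) (h2 : α ≠ -β)
    (hp : p ∈ RU U) (hq : q ∈ RU U) : lineInt α β p q ∈ RU U := by
  obtain ⟨m, hm⟩ := Set.mem_iUnion.mp hp
  obtain ⟨n, hn⟩ := Set.mem_iUnion.mp hq
  refine Set.mem_iUnion.mpr ⟨max m n + 1, α, hα, β, hβ, h1, h2, p, ?_, q, ?_, rfl⟩
  · exact stepSet_mono hU hα hβ h1 h2 (le_max_left m n) hm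
  · exact stepSet_mono hU hα hβ h1 h2 (le_max_right m n) hn

lemma RU_lineInt_pm {U : Set ℂ} (hU : ∀ z ∈ U, ‖z‖ = 1) {α β p q : ℂ}
    (hα : α ∈ U ∨ -α ∈ U) (hβ : β ∈ U ∨ -β ∈ U) (h1 : α ≠ β) (h2 : α ≠ -β)
    (hp : p ∈ RU U) (hq : q ∈ RU U) : lineInt α β p q ∈ RU U := by
  have h1' : -α ≠ β := fun h => h2 (by rw [← h]; ring)
  have h2' : -α ≠ -β := fun h => h1 (neg_inj.mp h)
  have h3' : α ≠ -(-β) := by rw [neg_neg]; exact h1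
  have h4' : -α ≠ -(-β) := by rw [neg_neg]; exact h1'
  rcases hα with hα | hα <;> rcases hβ with hβ | hβ
  · exact RU_lineInt hU hα hβ h1 h2 hp hq
  · rw [← lineInt_neg_right]; exact RU_lineInt hU hα hβ h2 h3' hp hq
  · rw [← lineInt_neg_left]; exact RU_lineInt hU hα hβ h1' h2' hp hq
  · rw [← lineInt_neg_left, ← lineInt_neg_right]
    exact RU_lineInt hU hα hβ h2' h4' hp hq

lemma unit_mul_conj {U : Set ℂ} (hU : ∀ z ∈ U, ‖z‖ = 1) {γ : ℂ} (hγ : γ ∈ U) :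
    γ * (starRingEnd ℂ) γ = 1 := by
  rw [Complex.mul_conj, Complex.normSq_eq_norm_sq, hU γ hγ]; norm_num

lemma unit_ne_zero {U : Set ℂ} (hU : ∀ z ∈ U, ‖z‖ = 1) {γ : ℂ} (hγ : γ ∈ U) :
    γ ≠ 0 := by
  intro h; have := hU γ hγ; rw [h] at this; simp at this

lemma RU_scale {U : Set ℂ} (hU : ∀ z ∈ U, ‖z‖ = 1)
    (hmul : ∀ α ∈ U, ∀ β ∈ U, α * β ∈ U ∨ -(α * β) ∈ U)
    {c γ : ℂ} (hc : (starRingEnd ℂ) c = c) (hγ : γ ∈ U) (hcγ : c * γ ∈ RU U)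
    {z : ℂ} (hz : z ∈ RU U) : c * γ * z ∈ RU U := by
  obtain ⟨n, hn⟩ := Set.mem_iUnion.mp hz
  clear hz
  induction n generalizing z with
  | zero =>
      rcases hn with h | h
      · rw [show z = 0 from h]; simpa using zero_mem_RU U
      · rw [show z = 1 from h]; simpa using hcγ
  | succ n ih =>
      obtain ⟨α, hα, β, hβ, h1, h2, p, hp, q, hq, rfl⟩ := hn
      have hγ0 : γ ≠ 0 := unit_ne_zero hU hγ
      have e : c * γ * lineInt α β p q = lineInt (γ*α) (γ*β) (c*γ*p) (c*γ*q) := by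
        rw [show c*γ*p = γ*(c*p) by ring, show c*γ*q = γ*(c*q) by ring,
          lineInt_rot (unit_mul_conj hU hγ), lineInt_smul hc]
        ring
      rw [e]
      refine RU_lineInt_pm hU (hmul γ hγ α hα) (hmul γ hγ β hβ) ?_ ?_ (ih hp) (ih hq)
      · intro h; exact h1 (mul_left_cancel₀ hγ0 h)
      · intro h; refine h2 (mul_left_cancel₀ hγ0 ?_); rw [h]; ring

lemma conj_ratio (x y z w : ℂ) :
    (starRingEnd ℂ) (brkt x y / brkt z w) = brkt x y / brkt z w := by
  rw [map_div₀, conj_brkt, conj_brkt, neg_div_neg_eq]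

lemma lineInt_right_zero (α β p : ℂ) :
    lineInt α β p 0 = brkt α p / brkt α β * β := by
  rw [lineInt, brkt_zero_right]; simp

lemma lineInt_left_zero (α β q : ℂ) :
    lineInt α β 0 q = brkt β q / brkt β α * α := by
  rw [lineInt, brkt_zero_right]; simp

lemma RU_decomp {U : Set ℂ} (hU : ∀ z ∈ U, ‖z‖ = 1) (h1U : (1:ℂ) ∈ U)
    {z : ℂ} (hz : z ∈ RU U) :
    ∃ c₁ γ₁ c₂ γ₂ : ℂ, (starRingEnd ℂ) c₁ = c₁ ∧ (starRingEnd ℂ) c₂ = c₂ ∧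
      γ₁ ∈ U ∧ γ₂ ∈ U ∧ c₁ * γ₁ ∈ RU U ∧ c₂ * γ₂ ∈ RU U ∧ z = c₁ * γ₁ + c₂ * γ₂ := by
  obtain ⟨n, hn⟩ := Set.mem_iUnion.mp hz
  match n, hn with
  | 0, hn =>
      rcases hn with h | h
      · exact ⟨0, 1, 0, 1, by simp, by simp, h1U, h1U, by simpa using zero_mem_RU U,
          by simpa using zero_mem_RU U, by rw [show z = 0 from h]; ring⟩
      · exact ⟨1, 1, 0, 1, by simp, by simp, h1U, h1U, by simpa using one_mem_RU U,
          by simpa using zero_mem_RU U, by rw [show z = 1 from h]; ring⟩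
  | n+1, hn =>
      obtain ⟨α, hα, β, hβ, h1, h2, p, hp, q, hq, rfl⟩ := hn
      have hpRU : p ∈ RU U := Set.mem_iUnion.mpr ⟨n, hp⟩
      have hqRU : q ∈ RU U := Set.mem_iUnion.mpr ⟨n, hq⟩
      refine ⟨brkt α p / brkt α β, β, brkt β q / brkt β α, α,
        conj_ratio _ _ _ _, conj_ratio _ _ _ _, hβ, hα, ?_, ?_, by rw [lineInt]⟩
      · rw [← lineInt_right_zero]
        exact RU_lineInt hU hα hβ h1 h2 hpRU (zero_mem_RU U)
      · rw [← lineInt_left_zero]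
        exact RU_lineInt hU hα hβ h1 h2 (zero_mem_RU U) hqRU

lemma exists_two {U : Set ℂ} {u v w : ℂ} (hu : u ∈ U) (hv : v ∈ U) (hw : w ∈ U)
    (huv : u ≠ v) (huv' : u ≠ -v) (huw : u ≠ w) (huw' : u ≠ -w)
    (hvw : v ≠ w) (hvw' : v ≠ -w) (γ : ℂ) :
    ∃ δ ∈ U, ∃ ε ∈ U, γ ≠ δ ∧ γ ≠ -δ ∧ γ ≠ ε ∧ γ ≠ -ε ∧ δ ≠ ε ∧ δ ≠ -ε := by
  by_cases h1 : γ = u ∨ γ = -u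
  · rcases h1 with h | h <;> subst h
    · exact ⟨v, hv, w, hw, huv, huv', huw, huw', hvw, hvw'⟩
    · refine ⟨v, hv, w, hw, ?_, ?_, ?_, ?_, hvw, hvw'⟩
      · exact fun h => huv' (neg_eq_iff_eq_neg.mp h)
      · exact fun h => huv (neg_inj.mp h)
      · exact fun h => huw' (neg_eq_iff_eq_neg.mp h)
      · exact fun h => huw (neg_inj.mp h)
  · push_neg at h1
    by_cases h2 : γ = v ∨ γ = -v
    · rcases h2 with h | h <;> subst h
      · refine ⟨u, hu, w, hw, ?_, ?_, hvw, hvw', huw, huw'⟩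
        · exact fun h => huv (h.symm)
        · exact fun h => huv' (by linear_combination h)
      · refine ⟨u, hu, w, hw, ?_, ?_, ?_, ?_, huw, huw'⟩
        · exact fun h => huv' (by linear_combination -h)
        · exact fun h => huv (by linear_combination h)
        · exact fun h => hvw' (by linear_combination -h)
        · exact fun h => hvw (by linear_combination -h)
    · push_neg at h2
      exact ⟨u, hu, v, hv, h1.1, h1.2, h2.1, h2.2, huv, huv'⟩

lemma brkt_anti_ne {x y : ℂ} (h : brkt x y ≠ 0) : brkt y x ≠ 0 := by
  rw [brkt_anti]; simpa using h

lemma sameAxis_eq {γ δ ε c d : ℂ} (hδγ : brkt δ γ ≠ 0) (hδε : brkt δ ε ≠ 0)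
    (hεγ : brkt ε γ ≠ 0) (hc : (starRingEnd ℂ) c = c) (hd : (starRingEnd ℂ) d = d) :
    lineInt δ γ (lineInt ε γ (d * γ) (lineInt δ ε (c * γ) 0)) 0 = (c + d) * γ := by
  have hγε : brkt γ ε ≠ 0 := brkt_anti_ne hεγ
  set t : ℂ := brkt δ γ / brkt δ ε with ht
  have hct : (starRingEnd ℂ) (c * t) = c * t := by
    rw [map_mul, hc, ht, conj_ratio]
  have ha : lineInt δ ε (c * γ) 0 = (c * t) * ε := by
    rw [lineInt_right_zero, brkt_mul_right _ _ _ hc, ht]; ring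
  have hb : lineInt ε γ (d * γ) ((c * t) * ε) = d * γ + (c * t) * ε := by
    rw [lineInt, brkt_mul_right _ _ _ hd, brkt_mul_right _ _ _ hct,
      mul_div_assoc, mul_div_assoc, div_self hεγ, div_self hγε]
    ring
  have hz : lineInt δ γ (d * γ + (c * t) * ε) 0 = (c + d) * γ := by
    rw [lineInt_right_zero, brkt_add_right, brkt_mul_right _ _ _ hd,
      brkt_mul_right _ _ _ hct, ht]
    field_simp
    ring
  rw [ha, hb, hz]

lemma RU_sameAxis {U : Set ℂ} (hU : ∀ z ∈ U, ‖z‖ = 1)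
    {u v w : ℂ} (hu : u ∈ U) (hv : v ∈ U) (hw : w ∈ U)
    (huv : u ≠ v) (huv' : u ≠ -v) (huw : u ≠ w) (huw' : u ≠ -w)
    (hvw : v ≠ w) (hvw' : v ≠ -w)
    {γ c d : ℂ} (hγ : γ ∈ U) (hc : (starRingEnd ℂ) c = c) (hd : (starRingEnd ℂ) d = d)
    (h1 : c * γ ∈ RU U) (h2 : d * γ ∈ RU U) : (c + d) * γ ∈ RU U := by
  obtain ⟨δ, hδ, ε, hε, hγδ, hγδ', hγε, hγε', hδε, hδε'⟩ :=
    exists_two hu hv hw huv huv' huw huw' hvw hvw' γ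
  have hδγ1 : δ ≠ γ := hγδ.symm
  have hδγ2 : δ ≠ -γ := fun h => hγδ' (by linear_combination h)
  have hεγ1 : ε ≠ γ := hγε.symm
  have hεγ2 : ε ≠ -γ := fun h => hγε' (by linear_combination h)
  have bδγ : brkt δ γ ≠ 0 := brkt_ne_zero (hU δ hδ) (hU γ hγ) hδγ1 hδγ2
  have bδε : brkt δ ε ≠ 0 := brkt_ne_zero (hU δ hδ) (hU ε hε) hδε hδε'
  have bεγ : brkt ε γ ≠ 0 := brkt_ne_zero (hU ε hε) (hU γ hγ) hεγ1 hεγ2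
  rw [← sameAxis_eq bδγ bδε bεγ hc hd]
  exact RU_lineInt hU hδ hγ hδγ1 hδγ2
    (RU_lineInt hU hε hγ hεγ1 hεγ2 h2
      (RU_lineInt hU hδ hε hδε hδε' h1 (zero_mem_RU U)))
    (zero_mem_RU U)

lemma neg_one_eq {δ ε : ℂ} (hδ1 : brkt δ 1 ≠ 0) (hδε : brkt δ ε ≠ 0)
    (h1ε : brkt 1 ε ≠ 0) :
    lineInt δ 1 (lineInt 1 ε (lineInt δ ε 0 1) 0) 0 = -1 := by
  set t : ℂ := brkt ε 1 / brkt ε δ with ht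
  have htc : (starRingEnd ℂ) t = t := by rw [ht, conj_ratio]
  have hP : lineInt δ ε 0 1 = t * δ := by rw [lineInt_left_zero]
  set s : ℂ := t * (brkt 1 δ / brkt 1 ε) with hs
  have hsc : (starRingEnd ℂ) s = s := by rw [hs, map_mul, htc, conj_ratio]
  have hQ : lineInt 1 ε (t * δ) 0 = s * ε := by
    rw [lineInt_right_zero, brkt_mul_right _ _ _ htc, hs]; ring
  have hx : lineInt δ 1 (s * ε) 0 = s * (brkt δ ε / brkt δ 1) := by
    rw [lineInt_right_zero, brkt_mul_right _ _ _ hsc]; ring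
  rw [hP, hQ, hx, hs, ht]
  have hεδ : brkt ε δ ≠ 0 := brkt_anti_ne hδε
  field_simp
  simp only [brkt, map_one]
  ring

lemma RU_neg_one {U : Set ℂ} (hU : ∀ z ∈ U, ‖z‖ = 1) (h1U : (1:ℂ) ∈ U)
    {u v w : ℂ} (hu : u ∈ U) (hv : v ∈ U) (hw : w ∈ U)
    (huv : u ≠ v) (huv' : u ≠ -v) (huw : u ≠ w) (huw' : u ≠ -w)
    (hvw : v ≠ w) (hvw' : v ≠ -w) : (-1 : ℂ) ∈ RU U := by
  obtain ⟨δ, hδ, ε, hε, h1δ, h1δ', h1ε, h1ε', hδε, hδε'⟩ :=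
    exists_two hu hv hw huv huv' huw huw' hvw hvw' 1
  have hδ1 : δ ≠ (1:ℂ) := h1δ.symm
  have hδ1' : δ ≠ -(1:ℂ) := fun h => h1δ' (by linear_combination h)
  have hε1 : ε ≠ (1:ℂ) := h1ε.symm
  have bδ1 : brkt δ 1 ≠ 0 := brkt_ne_zero (hU δ hδ) (by simp) hδ1 hδ1'
  have bδε : brkt δ ε ≠ 0 := brkt_ne_zero (hU δ hδ) (hU ε hε) hδε hδε'
  have b1ε : brkt 1 ε ≠ 0 := brkt_ne_zero (by simp) (hU ε hε) h1ε h1ε'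
  rw [← neg_one_eq bδ1 bδε b1ε]
  exact RU_lineInt hU hδ h1U hδ1 hδ1'
    (RU_lineInt hU h1U hε h1ε h1ε'
      (RU_lineInt hU hδ hε hδε hδε' (zero_mem_RU U) (one_mem_RU U)) (zero_mem_RU U))
    (zero_mem_RU U)

lemma RU_neg {U : Set ℂ} (hU : ∀ z ∈ U, ‖z‖ = 1) (h1U : (1:ℂ) ∈ U)
    (hmul : ∀ α ∈ U, ∀ β ∈ U, α * β ∈ U ∨ -(α * β) ∈ U)
    {u v w : ℂ} (hu : u ∈ U) (hv : v ∈ U) (hw : w ∈ U)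
    (huv : u ≠ v) (huv' : u ≠ -v) (huw : u ≠ w) (huw' : u ≠ -w)
    (hvw : v ≠ w) (hvw' : v ≠ -w) {z : ℂ} (hz : z ∈ RU U) : -z ∈ RU U := by
  have h := RU_scale hU hmul (c := -1) (γ := 1) (by simp) h1U
    (by simpa using RU_neg_one hU h1U hu hv hw huv huv' huw huw' hvw hvw') hz
  simpa using h

lemma RU_addAxis {U : Set ℂ} (hU : ∀ z ∈ U, ‖z‖ = 1) (h1U : (1:ℂ) ∈ U)
    {u v w : ℂ} (hu : u ∈ U) (hv : v ∈ U) (hw : w ∈ U)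
    (huv : u ≠ v) (huv' : u ≠ -v) (huw : u ≠ w) (huw' : u ≠ -w)
    (hvw : v ≠ w) (hvw' : v ≠ -w)
    {c γ : ℂ} (hc : (starRingEnd ℂ) c = c) (hγ : γ ∈ U) (hcγ : c * γ ∈ RU U)
    {z : ℂ} (hz : z ∈ RU U) : z + c * γ ∈ RU U := by
  obtain ⟨n, hn⟩ := Set.mem_iUnion.mp hz
  clear hz
  induction n generalizing z with
  | zero =>
      rcases hn with h | h
      · rw [show z = 0 from h]; simpa using hcγ
      · rw [show z = 1 from h]
        by_cases hone : γ = 1 ∨ γ = -1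
        · rcases hone with h | h <;> subst h
          · have := RU_sameAxis hU hu hv hw huv huv' huw huw' hvw hvw' h1U
              (c := 1) (d := c) (by simp) hc (by simpa using one_mem_RU U) hcγ
            simpa using this
          · have hc' : (starRingEnd ℂ) (-c) = -c := by rw [map_neg, hc]
            have hm : (-c) * 1 ∈ RU U := by
              have : (-c) * 1 = c * (-1) := by ring
              rw [this]; exact hcγ
            have := RU_sameAxis hU hu hv hw huv huv' huw huw' hvw hvw' h1U
              (c := 1) (d := -c) (by simp) hc' (by simpa using one_mem_RU U) hm
            have e : (1 + -c) * 1 = 1 + c * (-1) := by ring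
            rwa [e] at this
        · push_neg at hone
          have bγ1 : brkt γ 1 ≠ 0 := brkt_ne_zero (hU γ hγ) (by simp) hone.1 hone.2
          have b1γ : brkt 1 γ ≠ 0 := brkt_anti_ne bγ1
          have key : lineInt γ 1 1 (c * γ) = 1 + c * γ := by
            rw [lineInt, brkt_mul_right _ _ _ hc, div_self bγ1, mul_div_assoc,
              div_self b1γ]
            ring
          rw [← key]
          exact RU_lineInt hU hγ h1U hone.1 hone.2 (one_mem_RU U) hcγ
  | succ n ih =>
      obtain ⟨α, hα, β, hβ, h1, h2, p, hp, q, hq, rfl⟩ := hn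
      have hαβ : brkt α β ≠ 0 := brkt_ne_zero (hU α hα) (hU β hβ) h1 h2
      rw [← lineInt_trans hαβ]
      exact RU_lineInt hU hα hβ h1 h2 (ih hp) (ih hq)

lemma RU_add {U : Set ℂ} (hU : ∀ z ∈ U, ‖z‖ = 1) (h1U : (1:ℂ) ∈ U)
    {u v w : ℂ} (hu : u ∈ U) (hv : v ∈ U) (hw : w ∈ U)
    (huv : u ≠ v) (huv' : u ≠ -v) (huw : u ≠ w) (huw' : u ≠ -w)
    (hvw : v ≠ w) (hvw' : v ≠ -w)
    {x y : ℂ} (hx : x ∈ RU U) (hy : y ∈ RU U) : x + y ∈ RU U := by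
  obtain ⟨c₁, γ₁, c₂, γ₂, hc₁, hc₂, hγ₁, hγ₂, h₁, h₂, rfl⟩ := RU_decomp hU h1U hy
  rw [← add_assoc]
  exact RU_addAxis hU h1U hu hv hw huv huv' huw huw' hvw hvw' hc₂ hγ₂ h₂
    (RU_addAxis hU h1U hu hv hw huv huv' huw huw' hvw hvw' hc₁ hγ₁ h₁ hx)

lemma RU_mul {U : Set ℂ} (hU : ∀ z ∈ U, ‖z‖ = 1) (h1U : (1:ℂ) ∈ U)
    (hmul : ∀ α ∈ U, ∀ β ∈ U, α * β ∈ U ∨ -(α * β) ∈ U)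
    {u v w : ℂ} (hu : u ∈ U) (hv : v ∈ U) (hw : w ∈ U)
    (huv : u ≠ v) (huv' : u ≠ -v) (huw : u ≠ w) (huw' : u ≠ -w)
    (hvw : v ≠ w) (hvw' : v ≠ -w)
    {x y : ℂ} (hx : x ∈ RU U) (hy : y ∈ RU U) : x * y ∈ RU U := by
  obtain ⟨c₁, γ₁, c₂, γ₂, hc₁, hc₂, hγ₁, hγ₂, h₁, h₂, rfl⟩ := RU_decomp hU h1U hx
  have e : (c₁ * γ₁ + c₂ * γ₂) * y = c₁ * γ₁ * y + c₂ * γ₂ * y := by ring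
  rw [e]
  exact RU_add hU h1U hu hv hw huv huv' huw huw' hvw hvw'
    (RU_scale hU hmul hc₁ hγ₁ h₁ hy) (RU_scale hU hmul hc₂ hγ₂ h₂ hy)

/-- if `U` is a subgroup of `T/{±1}` containing three pairwise non-±-equal
elements, then `R(U)` is a subring of `ℂ`. -/
theorem stmt4 (U : Set ℂ) (hU : ∀ z ∈ U, ‖z‖ = 1) (h1U : (1 : ℂ) ∈ U)
    (hmul : ∀ α ∈ U, ∀ β ∈ U, α * β ∈ U ∨ -(α * β) ∈ U)
    (hinv : ∀ α ∈ U, α⁻¹ ∈ U ∨ -α⁻¹ ∈ U)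
    (u v w : ℂ) (hu : u ∈ U) (hv : v ∈ U) (hw : w ∈ U)
    (huv : u ≠ v) (huv' : u ≠ -v) (huw : u ≠ w) (huw' : u ≠ -w)
    (hvw : v ≠ w) (hvw' : v ≠ -w) :
    ∃ A : Subring ℂ, (A : Set ℂ) = RU U := by
  refine ⟨{ carrier := RU U,
            zero_mem' := zero_mem_RU U,
            one_mem' := one_mem_RU U,
            add_mem' := fun ha hb =>
              RU_add hU h1U hu hv hw huv huv' huw huw' hvw hvw' ha hb,
            mul_mem' := fun ha hb =>
              RU_mul hU h1U hmul hu hv hw huv huv' huw huw' hvw hvw' ha hb,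
            neg_mem' := fun ha =>
              RU_neg hU h1U hmul hu hv hw huv huv' huw huw' hvw hvw' ha }, rfl⟩
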